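/- Let q be a distribution on {0,1}ⁿ with marginals Bernoulli(pᵢ). Then q is multimaximal if and only if for every nonempty subset S ⊆ {1,…,n}, Pr[Yᵢ = 1 for all i ∈ S] = min_{i∈S} pᵢ and Pr[Yᵢ = 0 for all i ∈ S] = 1 − max_{i∈S} pᵢ (both being the maximal possible values over all couplings). -/

import Mathlib

open Finset

private lemma key_mono (n : ℕ) (p : Fin n → ℝ) (q : (Fin n → Bool) → ℝ)
    (hq : ∀ y, 0 ≤ q y)
    (hm : ∀ i : Fin n, (∑ y, if y i = true then q y else 0) = p i)
    (hpair : ∀ i j : Fin n,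
        (∑ y, if y i = true ∧ y j = true then q y else 0) = min (p i) (p j))
    {i j : Fin n} (hij : p i ≤ p j) {y : Fin n → Bool} (hy : q y ≠ 0)
    (h1 : y i = true) : y j = true := by
  by_contra hj
  have h0 : (∑ z, ((if z i = true then q z else 0)
      - (if z i = true ∧ z j = true then q z else 0))) = 0 := by
    rw [Finset.sum_sub_distrib, hm i, hpair i j, min_eq_left hij, sub_self]
  have hterm : ∀ z : Fin n → Bool,
      0 ≤ (if z i = true then q z else 0) - (if z i = true ∧ z j = true then q z else 0) := by
    intro z
    by_cases h : z i = true
    · by_cases h' : z j = true <;> simp [h, h', hq z]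
    · simp [h]
  have hz := (Finset.sum_eq_zero_iff_of_nonneg (fun z _ => hterm z)).mp h0 y (Finset.mem_univ y)
  rw [if_pos h1, if_neg (by tauto)] at hz
  exact hy (by linarith)

theorem stmt_7 (n : ℕ) (p : Fin n → ℝ) (q : (Fin n → Bool) → ℝ)
    (hq : ∀ y, 0 ≤ q y) (hsum : (∑ y, q y) = 1)
    (hm : ∀ i : Fin n, (∑ y, if y i = true then q y else 0) = p i) :
    (∀ i j : Fin n,
        (∑ y, if y i = true ∧ y j = true then q y else 0) = min (p i) (p j)) ↔
    (∀ S : Finset (Fin n), ∀ hS : S.Nonempty,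
        (∑ y, if (∀ i ∈ S, y i = true) then q y else 0) = S.inf' hS p ∧
        (∑ y, if (∀ i ∈ S, y i = false) then q y else 0) = 1 - S.sup' hS p) := by
  constructor
  · intro hpair S hS
    obtain ⟨i0, hi0S, hi0⟩ := S.exists_mem_eq_inf' hS p
    obtain ⟨j0, hj0S, hj0⟩ := S.exists_mem_eq_sup' hS p
    constructor
    · rw [hi0, ← hm i0]
      apply Finset.sum_congr rfl
      intro y _
      by_cases hqy : q y = 0
      · split_ifs <;> simp [hqy]
      · refine if_congr ?_ rfl rfl
        constructor
        · intro h; exact h i0 hi0S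
        · intro h k hk
          have hle : p i0 ≤ p k := by
            have := Finset.inf'_le p hk
            rw [hi0] at this; exact this
          exact key_mono n p q hq hm hpair hle hqy h
    · have hstep : (∑ y, if (∀ i ∈ S, y i = false) then q y else 0)
          = ∑ y, if y j0 = false then q y else 0 := by
        apply Finset.sum_congr rfl
        intro y _
        by_cases hqy : q y = 0
        · split_ifs <;> simp [hqy]
        · refine if_congr ?_ rfl rfl
          constructor
          · intro h; exact h j0 hj0S
          · intro h k hk
            by_contra hk'
            have hk1 : y k = true := by
              cases hyk : y k
              · exact absurd hyk hk'
              · rfl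
            have hle : p k ≤ p j0 := by
              have := Finset.le_sup' p hk
              rw [hj0] at this; exact this
            have := key_mono n p q hq hm hpair hle hqy hk1
            rw [h] at this; exact Bool.false_ne_true this
      rw [hstep, hj0, ← hsum, ← hm j0, ← Finset.sum_sub_distrib]
      apply Finset.sum_congr rfl
      intro y _
      cases hy : y j0 <;> simp [hy]
  · intro h i j
    have hS : (insert i {j} : Finset (Fin n)).Nonempty := ⟨i, by simp⟩
    have h1 := (h (insert i {j}) hS).1
    have heq : (∑ y, if (∀ k ∈ (insert i {j} : Finset (Fin n)), y k = true) then q y else 0)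
        = ∑ y, if y i = true ∧ y j = true then q y else 0 := by
      apply Finset.sum_congr rfl
      intro y _
      refine if_congr ?_ rfl rfl
      simp [Finset.forall_mem_insert]
    rw [heq] at h1
    rw [h1]
    by_cases hij : i = j
    · subst hij; simp
    · rw [Finset.inf'_insert, Finset.inf'_singleton]; exact Finset.singleton_nonempty j
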